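/- Let R be an analytically irreducible local domain with completion R̂, let μ₁,...,μ_s be m_R-valuations with unique extensions μ̂₁,...,μ̂_s to m_{R̂}-valuations of R̂, and let n₁,...,n_s be positive integers. Then (I(μ₁)_{n₁} ∩ ... ∩ I(μ_s)_{n_s}) R̂ = I(μ̂₁)_{n₁} ∩ ... ∩ I(μ̂_s)_{n_s}, and (I(μ̂₁)_{n₁} ∩ ... ∩ I(μ̂_s)_{n_s}) ∩ R = I(μ₁)_{n₁} ∩ ... ∩ I(μ_s)_{n_s}. -/

import Mathlib

noncomputable section

open IsLocalRing

universe u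

variable {R : Type u} [CommRing R]

lemma aux_ofTensorProduct_R_tmul (I : Ideal R) (r : AdicCompletion I R) (c : R) :
    AdicCompletion.ofTensorProduct I R (r ⊗ₜ[R] c) =
      r * algebraMap R (AdicCompletion I R) c := by
  rw [AdicCompletion.ofTensorProduct_tmul]
  ext n
  rw [AdicCompletion.smul_eval, AdicCompletion.val_mul]
  rfl

lemma aux_mem_map_of_mapQ_zero [IsNoetherianRing R] (I K : Ideal R)
    (x : AdicCompletion I R)
    (hx : AdicCompletion.map I (Submodule.mkQ (K : Submodule R R)) x = 0) :
    x ∈ Ideal.map (algebraMap R (AdicCompletion I R)) K := by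
  haveI : Module.Finite R K := Module.Finite.iff_fg.mpr (IsNoetherian.noetherian K)
  have hex := AdicCompletion.map_exact (I := I)
    (Submodule.injective_subtype (K : Submodule R R))
    (LinearMap.exact_subtype_mkQ K) (Submodule.mkQ_surjective _)
  obtain ⟨y, hy⟩ := (hex x).mp hx
  obtain ⟨t, rfl⟩ := AdicCompletion.ofTensorProduct_surjective_of_finite I K y
  rw [← hy]
  clear hy hx
  induction t with
  | zero => simp only [map_zero]; exact Ideal.zero_mem _
  | tmul r k =>
      have hnat := LinearMap.congr_fun
        (AdicCompletion.ofTensorProduct_naturality I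
          (Submodule.subtype (K : Submodule R R))) (r ⊗ₜ[R] k)
      simp only [LinearMap.comp_apply] at hnat
      rw [hnat]
      simp only [TensorProduct.AlgebraTensorModule.map_tmul, LinearMap.id_coe, id_eq,
        Submodule.subtype_apply]
      rw [aux_ofTensorProduct_R_tmul]
      exact Ideal.mul_mem_left _ _ (Ideal.mem_map_of_mem _ k.2)
  | add t₁ t₂ h₁ h₂ =>
      simp only [map_add]
      exact Ideal.add_mem _ h₁ h₂

lemma aux_exists_sub_mem [IsNoetherianRing R] (I : Ideal R) (a : ℕ)
    (x : AdicCompletion I R) :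
    ∃ f : R, x - algebraMap R (AdicCompletion I R) f ∈
      Ideal.map (algebraMap R (AdicCompletion I R)) (I ^ a) := by
  obtain ⟨g, rfl⟩ := AdicCompletion.mk_surjective I R x
  refine ⟨g.val a, aux_mem_map_of_mapQ_zero I (I ^ a) _ ?_⟩
  ext n
  rw [AdicCompletion.map_val_apply, AdicCompletion.val_zero]
  have hz : (AdicCompletion.mk I R g - algebraMap R (AdicCompletion I R) (g.val a)).val n =
      Submodule.Quotient.mk (p := (I ^ n • ⊤ : Submodule R R)) (g.val n - g.val a) := by
    rw [AdicCompletion.val_sub, Submodule.Quotient.mk_sub]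
    rfl
  rw [hz, LinearMap.reduceModIdeal_apply, Pi.zero_apply, Submodule.Quotient.mk_eq_zero]
  rcases le_total n a with hna | han
  · have hmem : g.val n - g.val a ∈ (I ^ n • ⊤ : Submodule R R) :=
      Submodule.Quotient.eq _ |>.mp (g.property hna)
    have h3 : Submodule.mkQ ((I ^ a : Ideal R) : Submodule R R) (g.val n - g.val a) ∈
        Submodule.map (Submodule.mkQ ((I ^ a : Ideal R) : Submodule R R))
          (I ^ n • ⊤ : Submodule R R) := Submodule.mem_map_of_mem hmem
    rw [Submodule.map_smul'', Submodule.map_top] at h3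
    have hle : (I ^ n • LinearMap.range (Submodule.mkQ ((I ^ a : Ideal R) : Submodule R R)) :
        Submodule R (R ⧸ ((I ^ a : Ideal R) : Submodule R R))) ≤ I ^ n • ⊤ :=
      smul_mono_right (I ^ n) le_top
    exact hle h3
  · have hmem : g.val n - g.val a ∈ (I ^ a : Ideal R) := by
      have := Submodule.Quotient.eq _ |>.mp (g.property han)
      have h2 : (I ^ a • ⊤ : Submodule R R) = (I ^ a : Ideal R) := by
        rw [smul_eq_mul, Ideal.mul_top]
      rw [h2] at this
      simpa using (neg_mem this : -(g.val a - g.val n) ∈ _)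
  -- mkQ of element of K is zero
    have : Submodule.mkQ ((I ^ a : Ideal R) : Submodule R R) (g.val n - g.val a) = 0 := by
      rwa [Submodule.mkQ_apply, Submodule.Quotient.mk_eq_zero]
    rw [this]
    exact Submodule.zero_mem _

lemma aux_map_maximalIdeal_le [IsLocalRing R]
    [IsLocalRing (AdicCompletion (IsLocalRing.maximalIdeal R) R)] :
    Ideal.map (algebraMap R (AdicCompletion (IsLocalRing.maximalIdeal R) R))
      (IsLocalRing.maximalIdeal R) ≤
      IsLocalRing.maximalIdeal (AdicCompletion (IsLocalRing.maximalIdeal R) R) := by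
  rw [Ideal.map_le_iff_le_comap]
  intro z hz
  rw [Ideal.mem_comap, IsLocalRing.mem_maximalIdeal, mem_nonunits_iff]
  intro hu
  have h1 := hu.map (AdicCompletion.evalₐ (IsLocalRing.maximalIdeal R) 1)
  rw [AlgHom.commutes] at h1
  have h0 : (algebraMap R (R ⧸ (IsLocalRing.maximalIdeal R ^ 1)) z) = 0 := by
    rw [Ideal.Quotient.algebraMap_eq, Ideal.Quotient.eq_zero_iff_mem, pow_one]
    exact hz
  rw [h0] at h1
  haveI : Nontrivial (R ⧸ (IsLocalRing.maximalIdeal R ^ 1)) := by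
    rw [pow_one]
    exact Ideal.Quotient.nontrivial_iff.mpr (Ideal.IsMaximal.ne_top inferInstance)
  exact not_isUnit_zero h1


/-- **(Valuation ideals behave well under completion for analytically irreducible local
domains.)**  Let `R` be an analytically irreducible Noetherian local domain with `m_R`-adic
completion `R̂`, let `μ₁, …, μ_s` be `m_R`-valuations with unique extensions
`μ̂₁, …, μ̂_s` to `m_{R̂}`-valuations of `R̂` (so each valuation ideal of `μ̂ⱼ` contains a
power of `m_{R̂}`), and let `n₁, …, n_s` be positive integers.  Then
`(I(μ₁)_{n₁} ∩ ⋯ ∩ I(μ_s)_{n_s}) R̂ = I(μ̂₁)_{n₁} ∩ ⋯ ∩ I(μ̂_s)_{n_s}` and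
`(I(μ̂₁)_{n₁} ∩ ⋯ ∩ I(μ̂_s)_{n_s}) ∩ R = I(μ₁)_{n₁} ∩ ⋯ ∩ I(μ_s)_{n_s}`. -/
theorem stmt_13 {R : Type*} [CommRing R] [IsDomain R] [IsLocalRing R] [IsNoetherianRing R]
    [IsDomain (AdicCompletion (maximalIdeal R) R)]
    [IsLocalRing (AdicCompletion (maximalIdeal R) R)]
    (s : ℕ) (v : Fin s → AddValuation R (WithTop ℤ))
    (vhat : Fin s → AddValuation (AdicCompletion (maximalIdeal R) R) (WithTop ℤ))
    (hext : ∀ j, ∀ f : R,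
      vhat j (algebraMap R (AdicCompletion (maximalIdeal R) R) f) = v j f)
    (hnonneg : ∀ j, ∀ x : AdicCompletion (maximalIdeal R) R, 0 ≤ vhat j x)
    (J : Fin s → ℕ → Ideal R)
    (hJ : ∀ j m, ∀ f : R, f ∈ J j m ↔ ((m : ℤ) : WithTop ℤ) ≤ v j f)
    (Jhat : Fin s → ℕ → Ideal (AdicCompletion (maximalIdeal R) R))
    (hJhat : ∀ j m, ∀ x : AdicCompletion (maximalIdeal R) R,
      x ∈ Jhat j m ↔ ((m : ℤ) : WithTop ℤ) ≤ vhat j x)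
    (hprimary : ∀ j m, ∃ a : ℕ,
      (maximalIdeal (AdicCompletion (maximalIdeal R) R)) ^ a ≤ Jhat j m)
    (n : Fin s → ℕ) (hn : ∀ j, 0 < n j) :
    Ideal.map (algebraMap R (AdicCompletion (maximalIdeal R) R)) (⨅ j, J j (n j)) =
      (⨅ j, Jhat j (n j)) ∧
    Ideal.comap (algebraMap R (AdicCompletion (maximalIdeal R) R)) (⨅ j, Jhat j (n j)) =
      (⨅ j, J j (n j)) := by
  have key_comap : Ideal.comap (algebraMap R (AdicCompletion (maximalIdeal R) R))
      (⨅ j, Jhat j (n j)) = ⨅ j, J j (n j) := by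
    ext f
    simp only [Ideal.mem_comap, Ideal.mem_iInf, hJhat, hJ, hext]
  refine ⟨le_antisymm ?_ ?_, key_comap⟩
  · rw [Ideal.map_le_iff_le_comap, key_comap]
  · intro x hx
    obtain ⟨a, ha⟩ : ∃ a, (maximalIdeal (AdicCompletion (maximalIdeal R) R)) ^ a ≤
        ⨅ j, Jhat j (n j) := by
      choose A hA using fun j => hprimary j (n j)
      exact ⟨Finset.univ.sup A, le_iInf fun j => le_trans
        (Ideal.pow_le_pow_right (Finset.le_sup (Finset.mem_univ j))) (hA j)⟩
    have hmap_pow : Ideal.map (algebraMap R (AdicCompletion (maximalIdeal R) R))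
        ((maximalIdeal R) ^ a) ≤ (maximalIdeal (AdicCompletion (maximalIdeal R) R)) ^ a := by
      rw [Ideal.map_pow]
      exact Ideal.pow_right_mono aux_map_maximalIdeal_le a
    have hpowJ : (maximalIdeal R) ^ a ≤ ⨅ j, J j (n j) := by
      refine le_iInf fun j => fun f hf => (hJ j (n j) f).mpr ?_
      rw [← hext j f]
      refine (hJhat j (n j) _).mp ?_
      exact Ideal.mem_iInf.mp (ha (hmap_pow (Ideal.mem_map_of_mem _ hf))) j
    obtain ⟨f, hf⟩ := aux_exists_sub_mem (maximalIdeal R) a x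
    have hxf : x - algebraMap R (AdicCompletion (maximalIdeal R) R) f ∈
        ⨅ j, Jhat j (n j) := ha (hmap_pow hf)
    have halgf : algebraMap R (AdicCompletion (maximalIdeal R) R) f ∈
        ⨅ j, Jhat j (n j) := by
      have h2 := Ideal.sub_mem _ hx hxf
      simpa using h2
    have hfJ : f ∈ ⨅ j, J j (n j) := by
      rw [← key_comap]
      exact halgf
    have hxsplit : x = algebraMap R (AdicCompletion (maximalIdeal R) R) f +
        (x - algebraMap R (AdicCompletion (maximalIdeal R) R) f) := by ring
    rw [hxsplit]
    exact Ideal.add_mem _ (Ideal.mem_map_of_mem _ hfJ) (Ideal.map_mono hpowJ hf)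


end
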